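/- Let ℓ ∈ (0, 1/√2] and R > 0. Let f : ℝ^d → ℝ be twice continuously differentiable with f(x) = 0 whenever |x| > R, and let π : ℝ^d → ℝ^d be Lipschitz continuous with π(z) = z for |z| ≤ ℓ and π(z) = 0 for |z| > 2ℓ. Define Θ^π_f(x;z) := f(x+z) − f(x) − π(z)·∇f(x). Then there exists a constant C > 0, depending only on f, π, R and ℓ, such that for all x ∈ ℝ^d and all z, z' ∈ ℝ^d with |z'| ≤ |z|: |Θ^π_f(x;z) − Θ^π_f(x;z')| ≤ C · min(|z−z'|, 1) · ( 1_{|x|≤R+ℓ} · 1_{|z|≤ℓ} · |z| + 1_{|z| > max(ℓ, |x|−R)} ). -/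

import Mathlib

open scoped RealInnerProductSpace

noncomputable section

/-- `Θ^π_f(x;z) := f(x+z) − f(x) − π(z)·∇f(x)`. -/
def ThetaPi {d : ℕ} (π : EuclideanSpace ℝ (Fin d) → EuclideanSpace ℝ (Fin d))
    (f : EuclideanSpace ℝ (Fin d) → ℝ) (x z : EuclideanSpace ℝ (Fin d)) : ℝ :=
  f (x + z) - f x - ⟪π z, gradient f x⟫

/-- Continuity estimate for `Θ^π_f`: there is `C > 0` (depending on `f`, `π`, `R`, `ℓ`)
such that for all `x` and `|z'| ≤ |z|`,
`|Θ^π_f(x;z) − Θ^π_f(x;z')| ≤ C (|z−z'| ∧ 1)(1_{|x|≤R+ℓ} 1_{|z|≤ℓ} |z| + 1_{|z|>max(ℓ,|x|−R)})`. -/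
theorem thetaPi_diff_bound {d : ℕ} (ℓ R : ℝ) (hℓ : 0 < ℓ) (hℓ' : ℓ ≤ 1 / Real.sqrt 2)
    (hR : 0 < R)
    (f : EuclideanSpace ℝ (Fin d) → ℝ) (hf : ContDiff ℝ 2 f)
    (hsupp : ∀ x : EuclideanSpace ℝ (Fin d), R < ‖x‖ → f x = 0)
    (π : EuclideanSpace ℝ (Fin d) → EuclideanSpace ℝ (Fin d))
    (hπ_lip : ∃ L : NNReal, LipschitzWith L π)
    (hπ_id : ∀ z : EuclideanSpace ℝ (Fin d), ‖z‖ ≤ ℓ → π z = z)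
    (hπ_zero : ∀ z : EuclideanSpace ℝ (Fin d), 2 * ℓ < ‖z‖ → π z = 0) :
    ∃ C : ℝ, 0 < C ∧
      ∀ (x z z' : EuclideanSpace ℝ (Fin d)), ‖z'‖ ≤ ‖z‖ →
        |ThetaPi π f x z - ThetaPi π f x z'| ≤
          C * min ‖z - z'‖ 1 *
            ((if ‖x‖ ≤ R + ℓ then 1 else 0) * (if ‖z‖ ≤ ℓ then ‖z‖ else 0)
              + (if max ℓ (‖x‖ - R) < ‖z‖ then 1 else 0)) := by
  obtain ⟨L, hL⟩ := hπ_lip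
  have hℓ1 : ℓ ≤ 1 := by
    have h1 : (1:ℝ) ≤ Real.sqrt 2 := by
      rw [show (1:ℝ) = Real.sqrt 1 from (Real.sqrt_one).symm]
      exact Real.sqrt_le_sqrt (by norm_num)
    calc ℓ ≤ 1 / Real.sqrt 2 := hℓ'
      _ ≤ 1 / 1 := by
        apply div_le_div_of_nonneg_left (by norm_num) (by norm_num) h1
      _ = 1 := by norm_num
  have hfd : Differentiable ℝ f := hf.differentiable (by norm_num)
  have hcs : HasCompactSupport f := by
    apply HasCompactSupport.intro (isCompact_closedBall (0 : EuclideanSpace ℝ (Fin d)) R)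
    intro x hx
    apply hsupp
    simpa [Metric.mem_closedBall, dist_zero_right] using hx
  obtain ⟨M₀, hM₀⟩ := hcs.exists_bound_of_continuous hf.continuous
  have hM₀0 : 0 ≤ M₀ := le_trans (norm_nonneg _) (hM₀ 0)
  have hf1 : ContDiff ℝ 1 (fderiv ℝ f) := hf.fderiv_right (by norm_num)
  have hcs' : HasCompactSupport (fderiv ℝ f) := hcs.fderiv ℝ
  obtain ⟨M₁, hM₁⟩ := hcs'.exists_bound_of_continuous hf1.continuous
  have hM₁0 : 0 ≤ M₁ := le_trans (norm_nonneg _) (hM₁ 0)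
  obtain ⟨K₂, hK₂⟩ := ContDiff.lipschitzWith_of_hasCompactSupport hcs' hf1 one_ne_zero
  -- rewrite ThetaPi via fderiv
  have hTheta : ∀ x z : EuclideanSpace ℝ (Fin d),
      ThetaPi π f x z = f (x + z) - f x - fderiv ℝ f x (π z) := by
    intro x z
    rw [ThetaPi, real_inner_comm]
    congr 1
    exact InnerProductSpace.toDual_symm_apply
  -- f vanishes on ‖x‖ ≥ R
  have hf0 : ∀ x : EuclideanSpace ℝ (Fin d), R ≤ ‖x‖ → f x = 0 := by
    intro x hx
    rcases eq_or_lt_of_le hx with h | h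
    · have hsm : Filter.Tendsto (fun t : ℝ => t • x) (nhdsWithin 1 (Set.Ioi 1)) (nhds x) := by
        have : Filter.Tendsto (fun t : ℝ => t • x) (nhds 1) (nhds ((1:ℝ) • x)) :=
          (continuous_id.smul continuous_const).tendsto 1
        simpa using this.mono_left nhdsWithin_le_nhds
      have htend : Filter.Tendsto (fun t : ℝ => f (t • x)) (nhdsWithin 1 (Set.Ioi 1))
          (nhds (f x)) := (hf.continuous.tendsto x).comp hsm
      have heq : ∀ t : ℝ, t ∈ Set.Ioi (1:ℝ) → f (t • x) = 0 := by
        intro t ht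
        apply hsupp
        have : ‖t • x‖ = t * R := by
          rw [norm_smul, ← h, Real.norm_eq_abs, abs_of_pos (by linarith [Set.mem_Ioi.1 ht])]
        rw [this]
        nlinarith [Set.mem_Ioi.1 ht]
      have h2 : Filter.Tendsto (fun t : ℝ => f (t • x)) (nhdsWithin 1 (Set.Ioi 1))
          (nhds 0) := by
        apply Filter.Tendsto.congr' _ tendsto_const_nhds
        filter_upwards [self_mem_nhdsWithin] with t ht
        exact (heq t ht).symm
      exact tendsto_nhds_unique htend h2
    · exact hsupp x h
  -- fderiv vanishes on ‖x‖ > R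
  have hdf0 : ∀ x : EuclideanSpace ℝ (Fin d), R < ‖x‖ → fderiv ℝ f x = 0 := by
    intro x hx
    have hev : f =ᶠ[nhds x] fun _ => (0:ℝ) := by
      filter_upwards [Metric.ball_mem_nhds x (show (0:ℝ) < ‖x‖ - R by linarith)] with y hy
      apply hsupp
      rw [Metric.mem_ball, dist_eq_norm] at hy
      have h1 : ‖x‖ - ‖y‖ ≤ ‖y - x‖ := by
        have := norm_sub_norm_le x y
        rw [show x - y = -(y - x) from (neg_sub y x).symm, norm_neg] at this
        linarith
      linarith
    rw [hev.fderiv_eq]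
    exact fderiv_const_apply 0
  -- Theta vanishes when z stays in the dead zone
  have hzero : ∀ x z : EuclideanSpace ℝ (Fin d), ‖z‖ ≤ ‖x‖ - R → R < ‖x‖ →
      ThetaPi π f x z = 0 := by
    intro x z hz hx
    rw [hTheta, hdf0 x hx, hf0 x hx.le, hf0 (x + z)]
    · simp
    · have : ‖x‖ - ‖z‖ ≤ ‖x + z‖ := by
        have := norm_sub_norm_le x (-z)
        simpa [sub_neg_eq_add] using this
      linarith
  -- bound on π
  have hπ0 : π 0 = 0 := hπ_id 0 (by simpa using hℓ.le)
  have hπ_bdd : ∀ z : EuclideanSpace ℝ (Fin d), ‖π z‖ ≤ 2 * ℓ * L := by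
    intro z
    by_cases h : ‖z‖ ≤ 2 * ℓ
    · have h1 : ‖π z - π 0‖ ≤ L * ‖z - 0‖ := by
        simpa [dist_eq_norm] using hL.dist_le_mul z 0
      rw [hπ0, sub_zero, sub_zero] at h1
      calc ‖π z‖ ≤ L * ‖z‖ := h1
        _ ≤ L * (2 * ℓ) := by
          apply mul_le_mul_of_nonneg_left h L.2
        _ = 2 * ℓ * L := by ring
    · rw [hπ_zero z (not_le.1 h)]
      simp
      positivity
  have hπ_lipn : ∀ a b : EuclideanSpace ℝ (Fin d), ‖π a - π b‖ ≤ L * ‖a - b‖ := by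
    intro a b
    simpa [dist_eq_norm] using hL.dist_le_mul a b
  -- Lipschitz bound for f
  have hlipf : ∀ a b : EuclideanSpace ℝ (Fin d), ‖f a - f b‖ ≤ M₁ * ‖a - b‖ := by
    intro a b
    exact convex_univ.norm_image_sub_le_of_norm_fderiv_le (fun y _ => hfd y)
      (fun y _ => hM₁ y) trivial trivial
  -- crude bounds
  set Cc : ℝ := max ((1 + L) * M₁) (4 * M₀ + 4 * ℓ * L * M₁) with hCc
  have hCc0 : 0 ≤ Cc := le_trans (by positivity) (le_max_left _ _)
  have crude : ∀ x z z' : EuclideanSpace ℝ (Fin d),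
      |ThetaPi π f x z - ThetaPi π f x z'| ≤ Cc * min ‖z - z'‖ 1 := by
    intro x z z'
    have key : ThetaPi π f x z - ThetaPi π f x z'
        = (f (x + z) - f (x + z')) - fderiv ℝ f x (π z - π z') := by
      rw [hTheta, hTheta, map_sub]; ring
    rcases le_total ‖z - z'‖ 1 with hm | hm
    · rw [min_eq_left hm]
      rw [key]
      have h1 : ‖f (x + z) - f (x + z')‖ ≤ M₁ * ‖z - z'‖ := by
        have := hlipf (x + z) (x + z')
        simpa [add_sub_add_left_eq_sub] using this
      have h2 : |fderiv ℝ f x (π z - π z')| ≤ M₁ * (L * ‖z - z'‖) := by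
        calc |fderiv ℝ f x (π z - π z')| ≤ ‖fderiv ℝ f x‖ * ‖π z - π z'‖ :=
              (fderiv ℝ f x).le_opNorm _
          _ ≤ M₁ * (L * ‖z - z'‖) := by
              apply mul_le_mul (hM₁ x) (hπ_lipn z z') (norm_nonneg _) hM₁0
      have h3 : |(f (x + z) - f (x + z')) - fderiv ℝ f x (π z - π z')|
          ≤ M₁ * ‖z - z'‖ + M₁ * (L * ‖z - z'‖) := by
        refine le_trans (abs_sub _ _) ?_
        exact add_le_add h1 h2
      refine le_trans h3 ?_
      have : M₁ * ‖z - z'‖ + M₁ * (L * ‖z - z'‖) = (1 + L) * M₁ * ‖z - z'‖ := by ring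
      rw [this]
      apply mul_le_mul_of_nonneg_right (le_max_left _ _) (norm_nonneg _)
    · rw [min_eq_right hm]
      have hb : ∀ w : EuclideanSpace ℝ (Fin d), |ThetaPi π f x w| ≤ 2 * M₀ + 2 * ℓ * L * M₁ := by
        intro w
        rw [hTheta]
        have h1 : |f (x + w)| ≤ M₀ := hM₀ (x + w)
        have h2 : |f x| ≤ M₀ := hM₀ x
        have h3 : |fderiv ℝ f x (π w)| ≤ M₁ * (2 * ℓ * L) := by
          calc |fderiv ℝ f x (π w)| ≤ ‖fderiv ℝ f x‖ * ‖π w‖ := (fderiv ℝ f x).le_opNorm _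
            _ ≤ M₁ * (2 * ℓ * L) := by
                apply mul_le_mul (hM₁ x) (hπ_bdd w) (norm_nonneg _) hM₁0
        calc |f (x + w) - f x - fderiv ℝ f x (π w)|
            ≤ |f (x + w) - f x| + |fderiv ℝ f x (π w)| := abs_sub _ _
          _ ≤ (|f (x + w)| + |f x|) + |fderiv ℝ f x (π w)| := by
              exact add_le_add (abs_sub _ _) le_rfl
          _ ≤ (M₀ + M₀) + M₁ * (2 * ℓ * L) := by
              exact add_le_add (add_le_add h1 h2) h3
          _ = 2 * M₀ + 2 * ℓ * L * M₁ := by ring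
      calc |ThetaPi π f x z - ThetaPi π f x z'|
          ≤ |ThetaPi π f x z| + |ThetaPi π f x z'| := abs_sub _ _
        _ ≤ (2 * M₀ + 2 * ℓ * L * M₁) + (2 * M₀ + 2 * ℓ * L * M₁) := add_le_add (hb z) (hb z')
        _ = 4 * M₀ + 4 * ℓ * L * M₁ := by ring
        _ ≤ Cc := le_max_right _ _
        _ = Cc * 1 := (mul_one _).symm
  -- fine bound
  have fine : ∀ x z z' : EuclideanSpace ℝ (Fin d), ‖z'‖ ≤ ‖z‖ → ‖z‖ ≤ ℓ →
      |ThetaPi π f x z - ThetaPi π f x z'| ≤ K₂ * ‖z‖ * ‖z - z'‖ := by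
    intro x z z' hzz' hzℓ
    have hz' : ‖z'‖ ≤ ℓ := le_trans hzz' hzℓ
    have key : ThetaPi π f x z - ThetaPi π f x z'
        = f (x + z) - f (x + z') - (fderiv ℝ f x) ((x + z) - (x + z')) := by
      rw [hTheta, hTheta, hπ_id z hzℓ, hπ_id z' hz', add_sub_add_left_eq_sub, map_sub]
      ring
    rw [key]
    have bound : ∀ w ∈ segment ℝ (x + z') (x + z),
        ‖fderiv ℝ f w - fderiv ℝ f x‖ ≤ K₂ * ‖z‖ := by
      rintro w ⟨a, b, ha, hb, hab, rfl⟩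
      have hwx : (a • (x + z') + b • (x + z)) - x = a • z' + b • z := by
        have : a • (x + z') + b • (x + z) = (a + b) • x + (a • z' + b • z) := by
          module
        rw [this, hab, one_smul]
        abel
      have hn : ‖(a • (x + z') + b • (x + z)) - x‖ ≤ ‖z‖ := by
        rw [hwx]
        calc ‖a • z' + b • z‖ ≤ ‖a • z'‖ + ‖b • z‖ := norm_add_le _ _
          _ = a * ‖z'‖ + b * ‖z‖ := by
              rw [norm_smul, norm_smul, Real.norm_eq_abs, Real.norm_eq_abs,
                abs_of_nonneg ha, abs_of_nonneg hb]
          _ ≤ a * ‖z‖ + b * ‖z‖ := by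
              have := mul_le_mul_of_nonneg_left hzz' ha
              linarith
          _ = ‖z‖ := by rw [← add_mul, hab, one_mul]
      calc ‖fderiv ℝ f (a • (x + z') + b • (x + z)) - fderiv ℝ f x‖
          ≤ K₂ * ‖(a • (x + z') + b • (x + z)) - x‖ := by
            simpa [dist_eq_norm] using hK₂.dist_le_mul (a • (x + z') + b • (x + z)) x
        _ ≤ K₂ * ‖z‖ := by
            apply mul_le_mul_of_nonneg_left hn K₂.2
    have hseg : Convex ℝ (segment ℝ (x + z') (x + z)) := convex_segment _ _
    have hmvt := hseg.norm_image_sub_le_of_norm_fderiv_le'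
      (fun w _ => hfd w) bound (left_mem_segment ℝ _ _) (right_mem_segment ℝ _ _)
    calc |f (x + z) - f (x + z') - (fderiv ℝ f x) ((x + z) - (x + z'))|
        ≤ K₂ * ‖z‖ * ‖(x + z) - (x + z')‖ := hmvt
      _ = K₂ * ‖z‖ * ‖z - z'‖ := by rw [add_sub_add_left_eq_sub]
  -- final constant
  refine ⟨Cc + 2 * K₂ + 1, by positivity, ?_⟩
  intro x z z' hzz'
  set C : ℝ := Cc + 2 * K₂ + 1 with hC
  set m : ℝ := min ‖z - z'‖ 1 with hm
  have hm0 : 0 ≤ m := le_min (norm_nonneg _) zero_le_one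
  have hm1 : m ≤ 1 := min_le_right _ _
  have hCcC : Cc ≤ C := by
    have : (0:ℝ) ≤ 2 * K₂ := by positivity
    simp only [hC]; linarith
  by_cases hB : max ℓ (‖x‖ - R) < ‖z‖
  · rw [if_pos hB]
    have hA : (0:ℝ) ≤ (if ‖x‖ ≤ R + ℓ then (1:ℝ) else 0) * (if ‖z‖ ≤ ℓ then ‖z‖ else 0) := by
      apply mul_nonneg <;> split <;> simp [norm_nonneg]
    calc |ThetaPi π f x z - ThetaPi π f x z'| ≤ Cc * m := crude x z z'
      _ ≤ C * m := mul_le_mul_of_nonneg_right hCcC hm0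
      _ = C * m * 1 := (mul_one _).symm
      _ ≤ C * m * ((if ‖x‖ ≤ R + ℓ then (1:ℝ) else 0) * (if ‖z‖ ≤ ℓ then ‖z‖ else 0) + 1) := by
          apply mul_le_mul_of_nonneg_left _ (by positivity)
          linarith
  · rw [if_neg hB]
    push_neg at hB
    by_cases hz : ‖z‖ ≤ ℓ
    · rw [if_pos hz]
      by_cases hx : ‖x‖ ≤ R + ℓ
      · rw [if_pos hx]
        have hd2 : ‖z - z'‖ ≤ 2 := by
          calc ‖z - z'‖ ≤ ‖z‖ + ‖z'‖ := norm_sub_le _ _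
            _ ≤ ℓ + ℓ := add_le_add hz (le_trans hzz' hz)
            _ ≤ 2 := by linarith
        have hd2m : ‖z - z'‖ ≤ 2 * m := by
          rcases le_total ‖z - z'‖ 1 with h | h
          · rw [hm, min_eq_left h]; linarith [norm_nonneg (z - z')]
          · rw [hm, min_eq_right h]; linarith
        calc |ThetaPi π f x z - ThetaPi π f x z'| ≤ K₂ * ‖z‖ * ‖z - z'‖ := fine x z z' hzz' hz
          _ ≤ K₂ * ‖z‖ * (2 * m) := by
              apply mul_le_mul_of_nonneg_left hd2m (by positivity)
          _ = (2 * K₂) * m * ‖z‖ := by ring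
          _ ≤ C * m * ‖z‖ := by
              apply mul_le_mul_of_nonneg_right _ (norm_nonneg _)
              apply mul_le_mul_of_nonneg_right _ hm0
              simp only [hC]; linarith [hCc0]
          _ = C * m * (1 * ‖z‖ + 0) := by ring
      · rw [if_neg hx]
        push_neg at hx
        have hxR : R < ‖x‖ := by linarith
        have h1 : ThetaPi π f x z = 0 := hzero x z (by linarith) hxR
        have h2 : ThetaPi π f x z' = 0 := hzero x z' (by linarith [le_trans hzz' hz]) hxR
        rw [h1, h2, sub_zero, abs_zero]
        positivity
    · rw [if_neg hz]
      push_neg at hz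
      have hxz : ‖z‖ ≤ ‖x‖ - R := by
        rcases le_max_iff.1 hB with h | h
        · linarith
        · exact h
      have hxR : R < ‖x‖ := by linarith
      have h1 : ThetaPi π f x z = 0 := hzero x z hxz hxR
      have h2 : ThetaPi π f x z' = 0 := hzero x z' (le_trans hzz' hxz) hxR
      rw [h1, h2, sub_zero, abs_zero]
      simp only [mul_zero, add_zero]
      positivity
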